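/- If two reduced words w and w' for the same element of a Coxeter group differ by a single swap of adjacent commuting generators (a short braid relation), then their heaps H(w) and H(w') are isomorphic as labeled posets, via the transposition of the two swapped positions. -/

import Mathlib

/-- The heap (partial) order of the word `x : Fin m → B` over the Coxeter matrix
`M` : the reflexive-transitive closure of the relations `i ≺ j` for integer-ordered
positions `i < j` whose letters do not commute (`M (x i) (x j) ≠ 2`). -/
def heapLe {B : Type*} (M : CoxeterMatrix B) {m : ℕ} (x : Fin m → B) :
    Fin m → Fin m → Prop :=
  Relation.ReflTransGen (fun i j => i < j ∧ M (x i) (x j) ≠ 2)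

lemma swap_lt_aux {m : ℕ} {a b p q : Fin m} (hab : (a : ℕ) + 1 = (b : ℕ))
    (hpq : p < q) (hne : ¬(p = a ∧ q = b)) :
    Equiv.swap a b p < Equiv.swap a b q := by
  have hlt : (p : ℕ) < (q : ℕ) := hpq
  by_cases hpa : p = a
  · have hqb : q ≠ b := fun h => hne ⟨hpa, h⟩
    have hqa : q ≠ a := by
      intro h
      have h1 := congrArg Fin.val h
      have h2 := congrArg Fin.val hpa
      omega
    subst hpa
    rw [Equiv.swap_apply_left, Equiv.swap_apply_of_ne_of_ne hqa hqb]
    have h1 : (q : ℕ) ≠ (b : ℕ) := fun h => hqb (Fin.ext h)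
    exact Fin.lt_def.mpr (by omega)
  · by_cases hpb : p = b
    · have hqa : q ≠ a := by
        intro h
        have : (q : ℕ) < (b : ℕ) := by rw [h]; omega
        have : (p : ℕ) = (b : ℕ) := congrArg Fin.val hpb
        omega
      have hqb : q ≠ b := by
        intro h
        have : (p : ℕ) = (b : ℕ) := congrArg Fin.val hpb
        have : (q : ℕ) = (b : ℕ) := congrArg Fin.val h
        omega
      subst hpb
      rw [Equiv.swap_apply_right, Equiv.swap_apply_of_ne_of_ne hqa hqb]
      exact Fin.lt_def.mpr (by omega)
    · by_cases hqa : q = a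
      · subst hqa
        rw [Equiv.swap_apply_of_ne_of_ne hpa hpb, Equiv.swap_apply_left]
        exact Fin.lt_def.mpr (by omega)
      · by_cases hqb : q = b
        · subst hqb
          rw [Equiv.swap_apply_of_ne_of_ne hpa hpb, Equiv.swap_apply_right]
          have h1 : (p : ℕ) ≠ (a : ℕ) := fun h => hpa (Fin.ext h)
          exact Fin.lt_def.mpr (by omega)
        · rw [Equiv.swap_apply_of_ne_of_ne hpa hpb, Equiv.swap_apply_of_ne_of_ne hqa hqb]
          exact hpq

/-- If two reduced words for the same element of a Coxeter group differ by a single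
swap of adjacent commuting generators (a short braid relation), then their heaps are
isomorphic as labeled posets, via the transposition of the two swapped positions:
the transposition preserves labels and is an order isomorphism of the heap posets. -/
theorem stmt_11 {B W : Type*} [DecidableEq B] [Group W] {M : CoxeterMatrix B}
    (cs : CoxeterSystem M W) {m : ℕ} (x : Fin m → B) (a b : Fin m)
    (hab : (a : ℕ) + 1 = (b : ℕ))
    (hcomm : M (x a) (x b) = 2)
    (hred : cs.IsReduced (List.ofFn x))
    (hred' : cs.IsReduced (List.ofFn (x ∘ Equiv.swap a b)))
    (hsame : cs.wordProd (List.ofFn x) = cs.wordProd (List.ofFn (x ∘ Equiv.swap a b))) :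
    (∀ i, (x ∘ Equiv.swap a b) (Equiv.swap a b i) = x i) ∧
      (∀ i j, heapLe M x i j ↔
        heapLe M (x ∘ Equiv.swap a b) (Equiv.swap a b i) (Equiv.swap a b j)) := by
  set σ := Equiv.swap a b with hσ
  have hlabel : ∀ i, (x ∘ σ) (σ i) = x i := by
    intro i; simp [Function.comp, hσ]
  refine ⟨hlabel, fun i j => ?_⟩
  have hrel : ∀ p q : Fin m, (p < q ∧ M (x p) (x q) ≠ 2) →
      ((fun i j => i < j ∧ M ((x ∘ σ) i) ((x ∘ σ) j) ≠ 2) (σ p) (σ q)) := by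
    intro p q ⟨hlt, hM⟩
    refine ⟨swap_lt_aux hab hlt ?_, by rw [show ((x ∘ σ) (σ p)) = x p from hlabel p,
      show ((x ∘ σ) (σ q)) = x q from hlabel q]; exact hM⟩
    rintro ⟨rfl, rfl⟩; exact hM hcomm
  have hrel' : ∀ p q : Fin m, (p < q ∧ M ((x ∘ σ) p) ((x ∘ σ) q) ≠ 2) →
      ((fun i j => i < j ∧ M (x i) (x j) ≠ 2) (σ p) (σ q)) := by
    intro p q ⟨hlt, hM⟩
    refine ⟨swap_lt_aux hab hlt ?_, hM⟩
    rintro ⟨rfl, rfl⟩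
    apply hM
    simp only [Function.comp_apply, hσ, Equiv.swap_apply_left, Equiv.swap_apply_right]
    rw [M.symmetric]; exact hcomm
  constructor
  · intro h
    exact Relation.ReflTransGen.lift σ hrel _ _ h
  · intro h
    have := Relation.ReflTransGen.lift (p := fun i j => i < j ∧ M (x i) (x j) ≠ 2) σ hrel' _ _ h
    simpa [hσ, Function.onFun, heapLe] using this
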